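/- Let R be a discrete valuation ring with uniformizer π, let A be an R-algebra with no π-torsion, let I be an ideal of A with π ∈ I, and let A^C be the A-subalgebra of A[1/π] generated by { a/π : a ∈ I }. Then for every R-algebra B with no π-torsion and every R-algebra homomorphism v : A → B such that v(I) ⊆ πB, there exists a unique R-algebra homomorphism v′ : A^C → B whose composition with the inclusion A → A^C equals v. -/

import Mathlib

set_option maxHeartbeats 1000000 in
set_option synthInstance.maxHeartbeats 400000 in
/-- universal property of the Néron blow up.  Let `R` be a discrete valuation
ring with uniformizer `π`, let `A` be an `R`-algebra with no `π`-torsion, let `I` be an ideal of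
`A` with `π ∈ I`, and let `A^C` be the `A`-subalgebra of `A[1/π]` generated by
`{ a/π : a ∈ I }`.  Then for every `R`-algebra `B` with no `π`-torsion and every `R`-algebra
homomorphism `v : A → B` such that `v(I) ⊆ πB`, there exists a unique `R`-algebra homomorphism
`v′ : A^C → B` whose composition with the inclusion `A → A^C` equals `v`. -/
theorem neron_blowup_universal_property
    (R : Type*) [CommRing R] [IsDomain R] [IsDiscreteValuationRing R]
    (π : R) (hπ : Irreducible π)
    (A : Type*) [CommRing A] [Algebra R A]
    (hA : ∀ a : A, algebraMap R A π * a = 0 → a = 0)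
    (I : Ideal A) (hI : algebraMap R A π ∈ I)
    (AC : Subalgebra A (Localization.Away (algebraMap R A π)))
    (hAC : AC = Algebra.adjoin A
      { x : Localization.Away (algebraMap R A π) | ∃ a ∈ I,
        algebraMap A (Localization.Away (algebraMap R A π)) (algebraMap R A π) * x =
          algebraMap A (Localization.Away (algebraMap R A π)) a })
    (B : Type*) [CommRing B] [Algebra R B]
    (hB : ∀ b : B, algebraMap R B π * b = 0 → b = 0)
    (v : A →ₐ[R] B)
    (hv : ∀ a ∈ I, ∃ b : B, v a = algebraMap R B π * b) :
    ∃! v' : AC →ₐ[R] B, ∀ a : A, v' (algebraMap A AC a) = v a := by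
  let L := Localization.Away (algebraMap R A π)
  let LB := Localization.Away (algebraMap R B π)
  have hvπ : v (algebraMap R A π) = algebraMap R B π := v.commutes π
  have huB : IsUnit (algebraMap B LB (algebraMap R B π)) :=
    IsLocalization.Away.algebraMap_isUnit (algebraMap R B π)
  have hug : IsUnit (((algebraMap B LB).comp v.toRingHom) (algebraMap R A π)) := by
    simpa [hvπ] using huB
  let Φ : L →+* LB :=
    IsLocalization.Away.lift (g := (algebraMap B LB).comp v.toRingHom) (algebraMap R A π) hug
  have hΦa : ∀ a : A, Φ (algebraMap A L a) = algebraMap B LB (v a) := fun a =>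
    IsLocalization.Away.lift_eq (algebraMap R A π) hug a
  have hΦR : ∀ r : R, Φ (algebraMap R L r) = algebraMap R LB r := by
    intro r
    rw [IsScalarTower.algebraMap_apply R A L, hΦa, v.commutes,
      IsScalarTower.algebraMap_apply R B LB]
  have hinj : Function.Injective (algebraMap B LB) := by
    apply IsLocalization.injective (M := Submonoid.powers (algebraMap R B π)) LB
    rintro x ⟨n, rfl⟩
    refine pow_mem ?_ n
    rw [mem_nonZeroDivisors_iff_right]
    intro y hy
    exact hB y (by rwa [mul_comm] at hy)
  let f : B →ₐ[R] LB := IsScalarTower.toAlgHom R B LB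
  let e : B ≃ₐ[R] f.range := AlgEquiv.ofInjective f hinj
  have hmem : ∀ x : L, x ∈ AC → Φ x ∈ f.range := by
    intro x hx
    rw [hAC] at hx
    induction hx using Algebra.adjoin_induction with
    | mem x hx =>
      obtain ⟨a, haI, hax⟩ := hx
      obtain ⟨b, hb⟩ := hv a haI
      refine ⟨b, ?_⟩
      have h1 : algebraMap B LB (algebraMap R B π) * Φ x
          = algebraMap B LB (algebraMap R B π) * algebraMap B LB b := by
        calc algebraMap B LB (algebraMap R B π) * Φ x
            = Φ (algebraMap A L (algebraMap R A π) * x) := by rw [map_mul, hΦa, hvπ]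
        _ = Φ (algebraMap A L a) := by rw [hax]
        _ = algebraMap B LB (v a) := hΦa a
        _ = algebraMap B LB (algebraMap R B π) * algebraMap B LB b := by rw [hb, map_mul]
      exact (huB.mul_right_cancel ((mul_comm _ _).trans (h1.trans (mul_comm _ _)))).symm
    | algebraMap a => exact ⟨v a, (hΦa a).symm⟩
    | add x y hx hy ihx ihy => rw [map_add]; exact add_mem ihx ihy
    | mul x y hx hy ihx ihy => rw [map_mul]; exact mul_mem ihx ihy
  let Ψ : AC →ₐ[R] LB :=
    { toRingHom := Φ.comp AC.subtype
      commutes' := fun r => by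
        show Φ ((algebraMap R AC r : AC) : L) = algebraMap R LB r
        rw [show ((algebraMap R AC r : AC) : L) = algebraMap R L r from
          Subalgebra.coe_algebraMap AC r]
        exact hΦR r }
  have hΨmem : ∀ x : AC, Ψ x ∈ f.range := fun x => hmem x.1 x.2
  let v' : AC →ₐ[R] B := e.symm.toAlgHom.comp (Ψ.codRestrict f.range hΨmem)
  have hcoe : ∀ x : AC, f (v' x) = Ψ x := by
    intro x
    have h : e (v' x) = Ψ.codRestrict f.range hΨmem x := by
      simp [v']
    exact congrArg Subtype.val h
  have hprop : ∀ a : A, v' (algebraMap A AC a) = v a := by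
    intro a
    apply hinj
    rw [show algebraMap B LB (v' (algebraMap A AC a)) = f (v' (algebraMap A AC a)) from rfl,
      hcoe]
    show Φ ((algebraMap A AC a : L)) = algebraMap B LB (v a)
    rw [Subalgebra.coe_algebraMap]
    exact hΦa a
  have huniq : ∀ (w : AC →ₐ[R] B), (∀ a : A, w (algebraMap A AC a) = v a) →
      ∀ x, x ∈ Algebra.adjoin A
        { x : L | ∃ a ∈ I, algebraMap A L (algebraMap R A π) * x = algebraMap A L a } →
      ∀ h : x ∈ AC, w ⟨x, h⟩ = v' ⟨x, h⟩ := by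
    intro w hw x hx'
    induction hx' using Algebra.adjoin_induction with
    | mem x hxS =>
      intro h
      obtain ⟨a, haI, hax⟩ := hxS
      have key : ∀ u : AC →ₐ[R] B, (∀ a : A, u (algebraMap A AC a) = v a) →
          algebraMap R B π * u ⟨x, h⟩ = v a := by
        intro u hu
        have h1 : (algebraMap A AC (algebraMap R A π)) * (⟨x, h⟩ : AC) = algebraMap A AC a :=
          Subtype.ext hax
        calc algebraMap R B π * u ⟨x, h⟩
            = u (algebraMap A AC (algebraMap R A π)) * u ⟨x, h⟩ := by rw [hu, hvπ]
        _ = u ((algebraMap A AC (algebraMap R A π)) * ⟨x, h⟩) := (map_mul u _ _).symm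
        _ = v a := by rw [h1, hu]
      have h0 : algebraMap R B π * (w ⟨x, h⟩ - v' ⟨x, h⟩) = 0 := by
        rw [mul_sub, key w hw, key v' hprop, sub_self]
      exact sub_eq_zero.mp (hB _ h0)
    | algebraMap a =>
      intro h
      have h2 : (⟨algebraMap A L a, h⟩ : AC) = algebraMap A AC a := Subtype.ext rfl
      rw [h2, hw, hprop]
    | add x y hx hy ihx ihy =>
      intro h
      have hxA : x ∈ AC := by rw [hAC]; exact hx
      have hyA : y ∈ AC := by rw [hAC]; exact hy
      have h2 : (⟨x + y, h⟩ : AC) = ⟨x, hxA⟩ + ⟨y, hyA⟩ := rfl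
      rw [h2, map_add, map_add, ihx hxA, ihy hyA]
    | mul x y hx hy ihx ihy =>
      intro h
      have hxA : x ∈ AC := by rw [hAC]; exact hx
      have hyA : y ∈ AC := by rw [hAC]; exact hy
      have h2 : (⟨x * y, h⟩ : AC) = ⟨x, hxA⟩ * ⟨y, hyA⟩ := rfl
      rw [h2, map_mul, map_mul, ihx hxA, ihy hyA]
  refine ⟨v', hprop, ?_⟩
  intro w hw
  ext ⟨x, hx⟩
  exact huniq w hw x (by rw [hAC] at hx; exact hx) hx
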